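/- With u(x,y) = e^{−M} cos(y) g(e^M x/cos(y)) on Q = (−1,1)², g(s) = s·arcsinh(s) − √(1+s²), and M > 1: u_xx(0,0) = e^M, |u_x(x,y)| = |arcsinh(e^M x/cos y)| ≤ C·M on Q for a constant C independent of M, and |u_y(x,y)| = |sin y|·(e^{−2M} + x²/cos²y)^{1/2} ≤ C on Q. -/

import Mathlib

open Real

lemma g_deriv (g : ℝ → ℝ) (hg : ∀ s, g s = s * Real.arsinh s - Real.sqrt (1 + s ^ 2))
    (s : ℝ) : HasDerivAt g (Real.arsinh s) s := by
  have hpos : (0:ℝ) < 1 + s ^ 2 := by positivity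
  have hs : Real.sqrt (1 + s ^ 2) ≠ 0 := by positivity
  have h1 : HasDerivAt (fun t : ℝ => t * Real.arsinh t)
      (1 * Real.arsinh s + s * (Real.sqrt (1 + s ^ 2))⁻¹) s :=
    (hasDerivAt_id s).mul (Real.hasDerivAt_arsinh s)
  have h2 : HasDerivAt (fun t : ℝ => 1 + t ^ 2) (0 + 2 * s ^ 1) s :=
    (hasDerivAt_const s 1).add (hasDerivAt_pow 2 s)
  have h3 : HasDerivAt (fun t : ℝ => Real.sqrt (1 + t ^ 2))
      ((0 + 2 * s ^ 1) / (2 * Real.sqrt (1 + s ^ 2))) s := h2.sqrt (by positivity)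
  have h4 := h1.sub h3
  have hfun : g = fun t : ℝ => t * Real.arsinh t - Real.sqrt (1 + t ^ 2) := funext hg
  rw [hfun]
  refine h4.congr_deriv ?_
  field_simp
  ring

lemma ux_deriv (M : ℝ) (g : ℝ → ℝ)
    (hg : ∀ s, g s = s * Real.arsinh s - Real.sqrt (1 + s ^ 2))
    (u : ℝ → ℝ → ℝ)
    (hu : ∀ x y, u x y = Real.exp (-M) * Real.cos y * g (Real.exp M * x / Real.cos y))
    (x y : ℝ) (hcy : Real.cos y ≠ 0) :
    HasDerivAt (fun a => u a y) (Real.arsinh (Real.exp M * x / Real.cos y)) x := by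
  have hfun : (fun a => u a y)
      = fun a => Real.exp (-M) * Real.cos y * g (Real.exp M * a / Real.cos y) := by
    funext a; exact hu a y
  rw [hfun]
  have hin : HasDerivAt (fun a : ℝ => Real.exp M * a / Real.cos y)
      (Real.exp M * 1 / Real.cos y) x :=
    (((hasDerivAt_id x).const_mul (Real.exp M)).div_const (Real.cos y))
  have h := ((g_deriv g hg _).comp x hin).const_mul (Real.exp (-M) * Real.cos y)
  refine h.congr_deriv ?_
  rw [Real.exp_neg]
  field_simp

lemma uy_deriv (M : ℝ) (g : ℝ → ℝ)
    (hg : ∀ s, g s = s * Real.arsinh s - Real.sqrt (1 + s ^ 2))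
    (u : ℝ → ℝ → ℝ)
    (hu : ∀ x y, u x y = Real.exp (-M) * Real.cos y * g (Real.exp M * x / Real.cos y))
    (x y : ℝ) (hcy : Real.cos y ≠ 0) :
    HasDerivAt (fun b => u x b)
      (Real.exp (-M) * Real.sin y *
        Real.sqrt (1 + (Real.exp M * x / Real.cos y) ^ 2)) y := by
  have hfun : (fun b => u x b)
      = fun b => Real.exp (-M) * Real.cos b * g (Real.exp M * x / Real.cos b) := by
    funext b; exact hu x b
  rw [hfun]
  have h1 : HasDerivAt Real.cos (-Real.sin y) y := Real.hasDerivAt_cos y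
  have h2 : HasDerivAt (fun b : ℝ => Real.exp M * x / Real.cos b)
      ((0 * Real.cos y - Real.exp M * x * (-Real.sin y)) / Real.cos y ^ 2) y :=
    (hasDerivAt_const y (Real.exp M * x)).div h1 hcy
  have h3 := (g_deriv g hg _).comp y h2
  have h4 := (h1.mul h3).const_mul (Real.exp (-M))
  have hfun2 : (fun b => Real.exp (-M) * Real.cos b * g (Real.exp M * x / Real.cos b))
      = fun b => Real.exp (-M) * (Real.cos b * g (Real.exp M * x / Real.cos b)) := by
    funext b; ring
  rw [hfun2]
  refine h4.congr_deriv ?_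
  simp only [Function.comp_apply]
  rw [hg]
  field_simp
  ring

lemma abs_arsinh (t : ℝ) : |Real.arsinh t| = Real.arsinh |t| := by
  rcases le_total 0 t with h | h
  · rw [abs_of_nonneg h, abs_of_nonneg (Real.arsinh_nonneg_iff.mpr h)]
  · rw [abs_of_nonpos h, abs_of_nonpos (Real.arsinh_nonpos_iff.mpr h), ← Real.arsinh_neg]

lemma arsinh_le_log (t : ℝ) (ht : 0 ≤ t) : Real.arsinh t ≤ Real.log (1 + 2 * t) := by
  rw [Real.le_log_iff_exp_le (by linarith), Real.exp_arsinh]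
  have : Real.sqrt (1 + t ^ 2) ≤ 1 + t := by
    rw [Real.sqrt_le_left (by linarith)]; nlinarith
  linarith


/-- Gradient and Hessian size of the sharpness example: `u_xx(0,0) = e^M`,
`|u_x| = |arsinh(e^M x / cos y)| ≤ C·M` and
`|u_y| = |sin y|·(e^{-2M} + x²/cos²y)^{1/2} ≤ C` on `Q = (-1,1)²`, with `C`
independent of `M`. -/
theorem stmt13 : ∃ C > (0 : ℝ), ∀ M : ℝ, 1 < M →
    ∀ g : ℝ → ℝ, (∀ s, g s = s * Real.arsinh s - Real.sqrt (1 + s ^ 2)) →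
    ∀ u : ℝ → ℝ → ℝ,
      (∀ x y, u x y =
        Real.exp (-M) * Real.cos y * g (Real.exp M * x / Real.cos y)) →
      deriv (fun a => deriv (fun b => u b 0) a) 0 = Real.exp M ∧
      ∀ x ∈ Set.Ioo (-1 : ℝ) 1, ∀ y ∈ Set.Ioo (-1 : ℝ) 1,
        |deriv (fun a => u a y) x| =
          |Real.arsinh (Real.exp M * x / Real.cos y)| ∧
        |deriv (fun a => u a y) x| ≤ C * M ∧
        |deriv (fun b => u x b) y| =
          |Real.sin y| *
            Real.sqrt (Real.exp (-(2 * M)) + x ^ 2 / Real.cos y ^ 2) ∧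
        |deriv (fun b => u x b) y| ≤ C := by
  refine ⟨3, by norm_num, fun M hM g hg u hu => ?_⟩
  have hexpM : (0:ℝ) < Real.exp M := Real.exp_pos M
  constructor
  · -- second derivative at (0,0)
    have hc0 : Real.cos (0:ℝ) ≠ 0 := by simp
    have hfun : (fun a => deriv (fun b => u b 0) a)
        = fun a => Real.arsinh (Real.exp M * a / Real.cos 0) :=
      funext fun a => (ux_deriv M g hg u hu a 0 hc0).deriv
    rw [hfun]
    have hin : HasDerivAt (fun a : ℝ => Real.exp M * a / Real.cos 0)
        (Real.exp M * 1 / Real.cos 0) 0 :=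
      ((hasDerivAt_id (0:ℝ)).const_mul (Real.exp M)).div_const (Real.cos 0)
    have h : HasDerivAt (fun a => Real.arsinh (Real.exp M * a / Real.cos 0))
        ((Real.sqrt (1 + (Real.exp M * 0 / Real.cos 0) ^ 2))⁻¹
          * (Real.exp M * 1 / Real.cos 0)) 0 :=
      (Real.hasDerivAt_arsinh _).comp 0 hin
    rw [h.deriv]
    simp
  · intro x hx y hy
    have hy2 : y ^ 2 < 1 := by nlinarith [hy.1, hy.2]
    have hcos : (1:ℝ)/2 < Real.cos y := by
      have := Real.one_sub_sq_div_two_le_cos (x := y)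
      linarith
    have hcospos : (0:ℝ) < Real.cos y := by linarith
    have hcy : Real.cos y ≠ 0 := ne_of_gt hcospos
    have hxabs : |x| < 1 := abs_lt.mpr ⟨hx.1, hx.2⟩
    have hux := (ux_deriv M g hg u hu x y hcy).deriv
    have huy := (uy_deriv M g hg u hu x y hcy).deriv
    set s := Real.exp M * x / Real.cos y with hs
    refine ⟨by rw [hux], ?_, ?_, ?_⟩
    · -- |u_x| ≤ 3 M
      rw [hux, abs_arsinh]
      have hsabs : |s| ≤ 2 * Real.exp M := by
        rw [hs, abs_div, abs_of_pos hcospos, abs_mul, abs_of_pos hexpM,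
          div_le_iff₀ hcospos]
        nlinarith [abs_nonneg x]
      have h1 : Real.arsinh |s| ≤ Real.log (1 + 2 * |s|) :=
        arsinh_le_log _ (abs_nonneg s)
      have h2 : Real.log (1 + 2 * |s|) ≤ Real.log (5 * Real.exp M) := by
        have hone : (1:ℝ) ≤ Real.exp M := Real.one_le_exp (by linarith)
        apply Real.log_le_log (by positivity)
        nlinarith [abs_nonneg s]
      have h3 : Real.log (5 * Real.exp M) = Real.log 5 + M := by
        rw [Real.log_mul (by norm_num) (ne_of_gt hexpM), Real.log_exp]
      have h4 : Real.log 5 ≤ 2 := by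
        rw [Real.log_le_iff_le_exp (by norm_num)]
        have he2 : Real.exp 2 = Real.exp 1 * Real.exp 1 := by
          rw [← Real.exp_add]; norm_num
        nlinarith [Real.exp_one_gt_d9]
      linarith
    · -- |u_y| equality
      rw [huy]
      have hkey : Real.exp (-M) * Real.sqrt (1 + s ^ 2)
          = Real.sqrt (Real.exp (-(2 * M)) + x ^ 2 / Real.cos y ^ 2) := by
        have he : Real.exp (-(2 * M)) * Real.exp M ^ 2 = 1 := by
          rw [sq, ← Real.exp_add, ← Real.exp_add, show -(2*M)+(M+M) = (0:ℝ) by ring, Real.exp_zero]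
        have h1 : Real.exp (-M) = Real.sqrt (Real.exp (-(2 * M))) := by
          rw [show -(2*M) = -M + -M by ring, Real.exp_add,
            Real.sqrt_mul_self (Real.exp_pos _).le]
        rw [h1, ← Real.sqrt_mul (Real.exp_pos _).le]
        congr 1
        rw [hs]
        field_simp
        linear_combination (x ^ 2) * he
      rw [abs_mul, abs_mul, abs_of_pos (Real.exp_pos _),
        abs_of_nonneg (Real.sqrt_nonneg _), mul_comm (Real.exp (-M)) |Real.sin y|,
        mul_assoc, hkey]
    · -- |u_y| ≤ 3
      rw [huy, abs_mul, abs_mul, abs_of_pos (Real.exp_pos _),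
        abs_of_nonneg (Real.sqrt_nonneg _)]
      have hsin : |Real.sin y| ≤ 1 := abs_le.mpr ⟨Real.neg_one_le_sin y, Real.sin_le_one y⟩
      have hsqrt : Real.exp (-M) * Real.sqrt (1 + s ^ 2) ≤ 3 := by
        have hkey : Real.exp (-M) * Real.sqrt (1 + s ^ 2)
            = Real.sqrt (Real.exp (-(2 * M)) + x ^ 2 / Real.cos y ^ 2) := by
          have he : Real.exp (-(2 * M)) * Real.exp M ^ 2 = 1 := by
            rw [sq, ← Real.exp_add, ← Real.exp_add, show -(2*M)+(M+M) = (0:ℝ) by ring, Real.exp_zero]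
          have h1 : Real.exp (-M) = Real.sqrt (Real.exp (-(2 * M))) := by
            rw [show -(2*M) = -M + -M by ring, Real.exp_add,
              Real.sqrt_mul_self (Real.exp_pos _).le]
          rw [h1, ← Real.sqrt_mul (Real.exp_pos _).le]
          congr 1
          rw [hs]
          field_simp
          linear_combination (x ^ 2) * he
        rw [hkey, Real.sqrt_le_left (by norm_num : (0:ℝ) ≤ 3)]
        have hexp1 : Real.exp (-(2 * M)) ≤ 1 := Real.exp_le_one_iff.mpr (by linarith)
        have hdiv : x ^ 2 / Real.cos y ^ 2 ≤ 4 := by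
          rw [div_le_iff₀ (by positivity)]
          nlinarith [abs_nonneg x, sq_abs x]
        norm_num
        linarith
      calc Real.exp (-M) * |Real.sin y| * Real.sqrt (1 + s ^ 2)
          = |Real.sin y| * (Real.exp (-M) * Real.sqrt (1 + s ^ 2)) := by ring
        _ ≤ 1 * 3 := by
            apply mul_le_mul hsin hsqrt (by positivity) (by norm_num)
        _ = 3 := by norm_num
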